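/- There exists a unique vector s* ∈ ℝ^d such that Dᵀα* = s* for every α* ∈ Ω*; moreover, for any α ∈ ℝ^m one has α ∈ Ω* if and only if Dᵀα = s* and α ∈ B∞(λ). -/

import Mathlib

open scoped RealInnerProductSpace
open Matrix

/-- The ℓ∞-ball of radius `lam` in `ℝ^m`. -/
def BinfBall (m : ℕ) (lam : ℝ) : Set (EuclideanSpace ℝ (Fin m)) :=
  {a | ∀ i, |a i| ≤ lam}


lemma descent_lemma {d : ℕ} {f : EuclideanSpace ℝ (Fin d) → ℝ}
    {f' : EuclideanSpace ℝ (Fin d) → EuclideanSpace ℝ (Fin d)} {ℓ : ℝ} (hℓ : 0 < ℓ)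
    (hgrad : ∀ x, HasGradientAt f (f' x) x)
    (hlip : ∀ β₁ β₂, ‖f' β₁ - f' β₂‖ ≤ ℓ * ‖β₁ - β₂‖)
    (x y : EuclideanSpace ℝ (Fin d)) :
    f y ≤ f x + ⟪f' x, y - x⟫ + ℓ / 2 * ‖y - x‖ ^ 2 := by
  set v := y - x with hv
  set g : ℝ → ℝ := fun t => f (x + t • v) - t * ⟪f' x, v⟫ - ℓ / 2 * t ^ 2 * ‖v‖ ^ 2 with hg
  have hc : ∀ t : ℝ, HasDerivAt (fun t : ℝ => x + t • v) v t := fun t => by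
    simpa using ((hasDerivAt_id t).smul_const v).const_add x
  have hderiv : ∀ t : ℝ, HasDerivAt g (⟪f' (x + t • v), v⟫ - ⟪f' x, v⟫ - ℓ * t * ‖v‖ ^ 2) t := by
    intro t
    have h1 : HasDerivAt (fun t : ℝ => f (x + t • v)) ⟪f' (x + t • v), v⟫ t := by
      have := (hgrad (x + t • v)).hasFDerivAt.comp_hasDerivAt t (hc t)
      simp at this
      exact this
    have h2 : HasDerivAt (fun t : ℝ => t * ⟪f' x, v⟫) ⟪f' x, v⟫ t := by
      simpa using hasDerivAt_mul_const (⟪f' x, v⟫)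
    have h3 : HasDerivAt (fun t : ℝ => ℓ / 2 * t ^ 2 * ‖v‖ ^ 2)
        (ℓ * t * ‖v‖ ^ 2) t := by
      have := ((hasDerivAt_pow 2 t).const_mul (ℓ / 2)).mul_const (‖v‖ ^ 2)
      exact this.congr_deriv (by rw [show (2:ℕ) - 1 = 1 from rfl, pow_one]; push_cast; ring)
    exact (h1.sub h2).sub h3
  have hanti : AntitoneOn g (Set.Icc (0:ℝ) 1) := by
    apply antitoneOn_of_deriv_nonpos (convex_Icc 0 1)
    · exact fun t _ => ((hderiv t).continuousAt).continuousWithinAt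
    · exact fun t _ => (hderiv t).differentiableAt.differentiableWithinAt
    · intro t ht
      rw [interior_Icc] at ht
      rw [(hderiv t).deriv]
      have hin : ⟪f' (x + t • v) - f' x, v⟫ ≤ ℓ * t * ‖v‖ ^ 2 := by
        calc ⟪f' (x + t • v) - f' x, v⟫ ≤ ‖f' (x + t • v) - f' x‖ * ‖v‖ :=
              real_inner_le_norm _ _
          _ ≤ (ℓ * ‖(x + t • v) - x‖) * ‖v‖ := by
              have := hlip (x + t • v) x
              nlinarith [norm_nonneg v]
          _ ≤ ℓ * t * ‖v‖ ^ 2 := by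
              have : ‖(x + t • v) - x‖ = |t| * ‖v‖ := by
                simp [norm_smul, abs_of_nonneg ht.1.le]
              rw [this, abs_of_nonneg ht.1.le]
              ring_nf
              nlinarith [norm_nonneg v, ht.1.le]
      rw [inner_sub_left] at hin
      linarith
  have h01 := hanti (Set.left_mem_Icc.2 zero_le_one) (Set.right_mem_Icc.2 zero_le_one)
    zero_le_one
  have e : x + (1:ℝ) • v = y := by rw [one_smul, hv]; abel
  have e1 : g 1 = f y - ⟪f' x, v⟫ - ℓ / 2 * ‖v‖ ^ 2 := by
    show f (x + (1:ℝ) • v) - 1 * ⟪f' x, v⟫ - ℓ / 2 * 1 ^ 2 * ‖v‖ ^ 2 = _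
    rw [e]; ring
  have e0 : g 0 = f x := by
    show f (x + (0:ℝ) • v) - 0 * ⟪f' x, v⟫ - ℓ / 2 * 0 ^ 2 * ‖v‖ ^ 2 = _
    rw [zero_smul, add_zero]; ring
  rw [e1, e0] at h01
  linarith

lemma fstar_lb {d : ℕ} {f : EuclideanSpace ℝ (Fin d) → ℝ}
    {f' : EuclideanSpace ℝ (Fin d) → EuclideanSpace ℝ (Fin d)} {ℓ : ℝ} (hℓ : 0 < ℓ)
    (hgrad : ∀ x, HasGradientAt f (f' x) x)
    (hlip : ∀ β₁ β₂, ‖f' β₁ - f' β₂‖ ≤ ℓ * ‖β₁ - β₂‖)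
    {fstar : EuclideanSpace ℝ (Fin d) → ℝ}
    (hfstar : ∀ x, IsLUB (Set.range fun β => ⟪x, β⟫ - f β) (fstar x))
    (x b : EuclideanSpace ℝ (Fin d)) :
    ⟪x, b⟫ - f b + 1 / (2 * ℓ) * ‖x - f' b‖ ^ 2 ≤ fstar x := by
  set u := x - f' b with hu
  set bb := b + ℓ⁻¹ • u with hbb
  have h1 : ⟪x, bb⟫ - f bb ≤ fstar x := (hfstar x).1 ⟨bb, rfl⟩
  have h2 : f bb ≤ f b + ⟪f' b, bb - b⟫ + ℓ / 2 * ‖bb - b‖ ^ 2 :=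
    descent_lemma hℓ hgrad hlip b bb
  have hbbb : bb - b = ℓ⁻¹ • u := by rw [hbb]; abel
  rw [hbbb] at h2
  have hx : ⟪x, bb⟫ = ⟪x, b⟫ + ℓ⁻¹ * ⟪x, u⟫ := by
    rw [hbb, inner_add_right, real_inner_smul_right]
  have hfb : ⟪f' b, ℓ⁻¹ • u⟫ = ℓ⁻¹ * ⟪f' b, u⟫ := real_inner_smul_right _ _ _
  have hnorm : ‖(ℓ⁻¹ : ℝ) • u‖ ^ 2 = ℓ⁻¹ ^ 2 * ‖u‖ ^ 2 := by
    rw [norm_smul, Real.norm_eq_abs, abs_of_pos (inv_pos.2 hℓ)]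
    ring
  have hinner : ⟪x, u⟫ - ⟪f' b, u⟫ = ‖u‖ ^ 2 := by
    rw [← inner_sub_left, ← hu, real_inner_self_eq_norm_sq]
  rw [hfb, hnorm] at h2
  rw [hx] at h1
  have hl' : ℓ ≠ 0 := hℓ.ne'
  set A := ⟪x, u⟫ with hA
  set B := ⟪f' b, u⟫ with hB2
  set N := ‖u‖ ^ 2 with hN
  have hBeq : B = A - N := by linarith [hinner]
  rw [hBeq] at h2
  have key : ℓ⁻¹ * (A - N) + ℓ / 2 * (ℓ⁻¹ ^ 2 * N) = ℓ⁻¹ * A - 1 / (2 * ℓ) * N := by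
    field_simp
    ring
  linarith [h1, h2, key]
lemma fstar_strictmid {d : ℕ} {f : EuclideanSpace ℝ (Fin d) → ℝ}
    {f' : EuclideanSpace ℝ (Fin d) → EuclideanSpace ℝ (Fin d)} {ℓ : ℝ} (hℓ : 0 < ℓ)
    (hgrad : ∀ x, HasGradientAt f (f' x) x)
    (hlip : ∀ β₁ β₂, ‖f' β₁ - f' β₂‖ ≤ ℓ * ‖β₁ - β₂‖)
    {fstar : EuclideanSpace ℝ (Fin d) → ℝ}
    (hfstar : ∀ x, IsLUB (Set.range fun β => ⟪x, β⟫ - f β) (fstar x))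
    {x y : EuclideanSpace ℝ (Fin d)} (hxy : x ≠ y) :
    fstar ((1/2 : ℝ) • x + (1/2 : ℝ) • y) < (fstar x + fstar y) / 2 := by
  have hub : fstar ((1/2 : ℝ) • x + (1/2 : ℝ) • y)
      ≤ (fstar x + fstar y) / 2 - 1 / (8 * ℓ) * ‖x - y‖ ^ 2 := by
    apply (hfstar _).2
    rintro r ⟨β, rfl⟩
    have hx := fstar_lb hℓ hgrad hlip hfstar x β
    have hy := fstar_lb hℓ hgrad hlip hfstar y β
    have hmix : ⟪(1/2 : ℝ) • x + (1/2 : ℝ) • y, β⟫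
        = (1/2 : ℝ) * ⟪x, β⟫ + (1/2 : ℝ) * ⟪y, β⟫ := by
      rw [inner_add_left, real_inner_smul_left, real_inner_smul_left]
    have hpar : ‖x - y‖ ^ 2 ≤ 2 * (‖x - f' β‖ ^ 2 + ‖y - f' β‖ ^ 2) := by
      have h1 : ‖x - y‖ ≤ ‖x - f' β‖ + ‖y - f' β‖ := by
        have := norm_sub_le (x - f' β) (y - f' β)
        simpa [sub_sub_sub_cancel_right] using this
      nlinarith [norm_nonneg (x - y), norm_nonneg (x - f' β), norm_nonneg (y - f' β),
        sq_nonneg (‖x - f' β‖ - ‖y - f' β‖)]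
    simp only [hmix]
    set sx := ‖x - f' β‖ ^ 2 with hsx
    set sy := ‖y - f' β‖ ^ 2 with hsy
    have hc : 1 / (8*ℓ) * ‖x - y‖ ^ 2 ≤ 1 / (8*ℓ) * (2 * (sx + sy)) := by
      apply mul_le_mul_of_nonneg_left hpar
      positivity
    have he : 1 / (8*ℓ) * (2 * (sx + sy))
        = 1/2 * (1 / (2*ℓ) * sx) + 1/2 * (1 / (2*ℓ) * sy) := by
      field_simp
      ring
    linarith [hx, hy, hc, he]
  have hpos : 0 < 1 / (8 * ℓ) * ‖x - y‖ ^ 2 := by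
    have : x - y ≠ 0 := sub_ne_zero.2 hxy
    have h2 : 0 < ‖x - y‖ := norm_pos_iff.2 this
    positivity
  linarith

/-- There exists a unique vector `s* ∈ ℝ^d` such that `Dᵀα* = s*` for every
`α*` in the optimal set `Ω* = argmin_{α ∈ B∞(λ)} f̄(α)` of the dual problem, and moreover
membership in `Ω*` is characterized by `Dᵀα = s*` together with `α ∈ B∞(λ)`. -/
theorem dual_optimal_set_characterization
    (d m : ℕ) (hd : 0 < d) (hm : 0 < m)
    (f : EuclideanSpace ℝ (Fin d) → ℝ)
    (f' : EuclideanSpace ℝ (Fin d) → EuclideanSpace ℝ (Fin d))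
    (μ ℓ : ℝ) (hμ : 0 < μ) (hμℓ : μ ≤ ℓ)
    (hconv : ConvexOn ℝ Set.univ f)
    (hgrad : ∀ x, HasGradientAt f (f' x) x)
    (hsc : ∀ β₁ β₂ : EuclideanSpace ℝ (Fin d),
      μ * ‖β₁ - β₂‖ ^ 2 ≤ ⟪f' β₁ - f' β₂, β₁ - β₂⟫)
    (hlip : ∀ β₁ β₂ : EuclideanSpace ℝ (Fin d),
      ‖f' β₁ - f' β₂‖ ≤ ℓ * ‖β₁ - β₂‖)
    (D : Matrix (Fin m) (Fin d) ℝ) (lam : ℝ) (hlam : 0 < lam)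
    (fstar : EuclideanSpace ℝ (Fin d) → ℝ)
    (hfstar : ∀ x, IsLUB (Set.range fun β => ⟪x, β⟫ - f β) (fstar x))
    (fbar : EuclideanSpace ℝ (Fin m) → ℝ)
    (hfbar : ∀ a, fbar a = fstar (Matrix.toEuclideanLin (𝕜 := ℝ) Dᵀ a))
    (Ω : Set (EuclideanSpace ℝ (Fin m)))
    (hΩ : Ω = {a | a ∈ BinfBall m lam ∧ ∀ a' ∈ BinfBall m lam, fbar a ≤ fbar a'}) :
    ∃! s : EuclideanSpace ℝ (Fin d),
      (∀ a ∈ Ω, Matrix.toEuclideanLin (𝕜 := ℝ) Dᵀ a = s) ∧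
      (∀ a, a ∈ Ω ↔ (Matrix.toEuclideanLin (𝕜 := ℝ) Dᵀ a = s ∧ a ∈ BinfBall m lam)) := by
  have hℓ : 0 < ℓ := lt_of_lt_of_le hμ hμℓ
  set T : EuclideanSpace ℝ (Fin m) →ₗ[ℝ] EuclideanSpace ℝ (Fin d) :=
    (Matrix.toEuclideanLin (𝕜 := ℝ) Dᵀ : _ →ₗ[ℝ] _) with hT
  -- fstar is convex
  have hconvstar : ConvexOn ℝ Set.univ fstar := by
    refine ⟨convex_univ, ?_⟩
    intro x _ y _ p q hp hq hpq
    refine (hfstar _).2 ?_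
    rintro r ⟨β, rfl⟩
    have hx : ⟪x, β⟫ - f β ≤ fstar x := (hfstar x).1 ⟨β, rfl⟩
    have hy : ⟪y, β⟫ - f β ≤ fstar y := (hfstar y).1 ⟨β, rfl⟩
    simp only [inner_add_left, real_inner_smul_left, smul_eq_mul]
    have hfb : p * f β + q * f β = f β := by linear_combination f β * hpq
    linarith [mul_le_mul_of_nonneg_left hx hp, mul_le_mul_of_nonneg_left hy hq, hfb]
  -- fbar is continuous
  have hcontstar : Continuous fstar := by
    exact continuousOn_univ.1 (hconvstar.continuousOn isOpen_univ)
  have hcontT : Continuous T := T.continuous_of_finiteDimensional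
  have hcontbar : Continuous fbar := by
    have : fbar = fun a => fstar (T a) := funext hfbar
    rw [this]
    exact hcontstar.comp hcontT
  -- BinfBall is compact, nonempty, convex
  have hBcompact : IsCompact (BinfBall m lam) := by
    have heq : BinfBall m lam = (EuclideanSpace.equiv (Fin m) ℝ).toHomeomorph ⁻¹'
        (Set.univ.pi fun _ => Set.Icc (-lam) lam) := by
      ext a
      constructor
      · intro h i _
        exact Set.mem_Icc.2 (abs_le.1 (h i))
      · intro h i
        exact abs_le.2 (Set.mem_Icc.1 (h i (Set.mem_univ i)))
    rw [heq, (EuclideanSpace.equiv (Fin m) ℝ).toHomeomorph.isCompact_preimage]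
    exact isCompact_univ_pi fun _ => isCompact_Icc
  have h0mem : (0 : EuclideanSpace ℝ (Fin m)) ∈ BinfBall m lam := by
    intro i
    simp [hlam.le]
  have hBmid : ∀ a b : EuclideanSpace ℝ (Fin m), a ∈ BinfBall m lam → b ∈ BinfBall m lam →
      (1/2 : ℝ) • a + (1/2 : ℝ) • b ∈ BinfBall m lam := by
    intro a b ha hb i
    have : ((1/2 : ℝ) • a + (1/2 : ℝ) • b) i = (1/2 : ℝ) * a i + (1/2 : ℝ) * b i := rfl
    rw [this]
    calc |(1/2 : ℝ) * a i + (1/2 : ℝ) * b i| ≤ |(1/2 : ℝ) * a i| + |(1/2 : ℝ) * b i| :=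
          abs_add_le _ _
      _ = (1/2 : ℝ) * |a i| + (1/2 : ℝ) * |b i| := by
          rw [abs_mul, abs_mul, abs_of_pos (by norm_num : (0:ℝ) < 1/2)]
      _ ≤ (1/2 : ℝ) * lam + (1/2 : ℝ) * lam := by
          have := ha i
          have := hb i
          linarith
      _ = lam := by ring
  -- existence of a minimizer
  obtain ⟨α₀, hα₀mem, hmin⟩ := hBcompact.exists_isMinOn ⟨0, h0mem⟩ hcontbar.continuousOn
  have hα₀Ω : α₀ ∈ Ω := by
    rw [hΩ]
    exact ⟨hα₀mem, fun a' ha' => hmin ha'⟩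
  refine ⟨T α₀, ⟨?_, ?_⟩, ?_⟩
  case _ =>
    -- all elements of Ω have the same image
    intro a ha
    rw [hΩ] at ha
    by_contra hne
    have hval : fbar a = fbar α₀ := le_antisymm (ha.2 _ hα₀mem) (hmin ha.1)
    have hmid := hBmid a α₀ ha.1 hα₀mem
    have hstrict := fstar_strictmid hℓ hgrad hlip hfstar hne
    have hTmid : T ((1/2 : ℝ) • a + (1/2 : ℝ) • α₀) = (1/2 : ℝ) • T a + (1/2 : ℝ) • T α₀ := by
      rw [map_add, T.map_smul, T.map_smul]
    have h1 : fbar ((1/2 : ℝ) • a + (1/2 : ℝ) • α₀) = fstar ((1/2 : ℝ) • T a + (1/2 : ℝ) • T α₀) := by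
      rw [hfbar, hTmid]
    have h2 := ha.2 _ hmid
    rw [h1] at h2
    rw [hfbar a, hfbar α₀] at hval
    rw [hfbar a] at h2
    linarith
  case _ =>
    intro a
    constructor
    · intro ha
      refine ⟨?_, ?_⟩
      · -- same proof as above; reuse: a and α₀ both minimize
        rw [hΩ] at ha
        by_contra hne
        have hval : fbar a = fbar α₀ := le_antisymm (ha.2 _ hα₀mem) (hmin ha.1)
        have hmid := hBmid a α₀ ha.1 hα₀mem
        have hstrict := fstar_strictmid hℓ hgrad hlip hfstar hne
        have hTmid : T ((1/2 : ℝ) • a + (1/2 : ℝ) • α₀)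
            = (1/2 : ℝ) • T a + (1/2 : ℝ) • T α₀ := by
          rw [map_add, T.map_smul, T.map_smul]
        have h1 : fbar ((1/2 : ℝ) • a + (1/2 : ℝ) • α₀)
            = fstar ((1/2 : ℝ) • T a + (1/2 : ℝ) • T α₀) := by
          rw [hfbar, hTmid]
        have h2 := ha.2 _ hmid
        rw [h1] at h2
        rw [hfbar a, hfbar α₀] at hval
        rw [hfbar a] at h2
        linarith
      · rw [hΩ] at ha
        exact ha.1
    · rintro ⟨hTa, haB⟩
      rw [hΩ]
      refine ⟨haB, fun a' ha' => ?_⟩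
      have : fbar a = fbar α₀ := by
        rw [hfbar a, hfbar α₀]
        exact congrArg fstar hTa
      rw [this]
      exact hmin ha'
  case _ =>
    intro s' hs'
    exact (hs'.1 α₀ hα₀Ω).symm
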